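/- Let G be a cyclic group of order p^a and H its unique subgroup of order p, where p is a prime. A finitely generated F_p[G]-module M is free over F_p[G] if and only if its restriction to H is free over F_p[H]. -/

import Mathlib

open Polynomial Function

universe v

section SocleShift
variable {R : Type*} [Ring R] {M : Type*} [AddCommGroup M] [Module R M] (t : R)

private lemma smul_smul_pow (a b : ℕ) (x : M) : t ^ a • t ^ b • x = t ^ (a + b) • x := by
  rw [smul_smul, ← pow_add]

/-- From the socle condition for `t` (exponent `n`), get it for all powers `t^i`, `i ≤ n`. -/
lemma socle_shift_up {n : ℕ}
    (h : ∀ x : M, t • x = 0 → ∃ y, x = t ^ (n - 1) • y) :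
    ∀ i, 1 ≤ i → i ≤ n → ∀ x : M, t ^ i • x = 0 → ∃ y, x = t ^ (n - i) • y := by
  intro i
  induction i with
  | zero => omega
  | succ i ih =>
    intro h1 hin x hx
    rcases Nat.eq_or_lt_of_le h1 with h1' | h1'
    · obtain rfl : i = 0 := by omega
      simpa using h x (by simpa using hx)
    · have hi1 : 1 ≤ i := by omega
      have hin' : i ≤ n := by omega
      have h2 : t • (t ^ i • x) = 0 := by
        rw [smul_smul, ← pow_succ']; exact hx
      obtain ⟨y, hy⟩ := h (t ^ i • x) h2
      have key : t ^ i • (x - t ^ (n - i - 1) • y) = 0 := by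
        rw [smul_sub, smul_smul_pow, sub_eq_zero]
        have h4 : i + (n - i - 1) = n - 1 := by omega
        rw [h4, ← hy]
      obtain ⟨z, hz⟩ := ih hi1 hin' _ key
      refine ⟨y + t • z, ?_⟩
      have h3 : x = t ^ (n - i - 1) • y + t ^ (n - i) • z := by
        rw [sub_eq_iff_eq_add.mp hz, add_comm]
      have hc : n - (i + 1) = n - i - 1 := by omega
      rw [hc, h3, smul_add]
      congr 1
      rw [smul_smul, ← pow_succ]
      congr 2
      omega


lemma socle_shift_down {q m : ℕ} (hm : 1 ≤ m) (hq : 2 * m ≤ q)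
    (A : ∀ x : M, t ^ m • x = 0 → ∃ y, x = t ^ (q - m) • y) :
    ∀ x : M, t • x = 0 → ∃ y, x = t ^ (q - 1) • y := by
  have main : ∀ j, j ≤ m - 1 → ∀ x : M, t ^ (m - j) • x = 0 →
      ∃ y, x = t ^ (q - (m - j)) • y := by
    intro j
    induction j with
    | zero => simpa using A
    | succ j ih =>
      intro hj x hx
      have h1 : t ^ (m - j) • x = 0 := by
        have e1 : m - j = 1 + (m - (j + 1)) := by omega
        rw [e1, ← smul_smul_pow, hx, smul_zero]
      obtain ⟨y, hy⟩ := ih (by omega) x h1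
      have h2 : t ^ (q - 1) • y = 0 := by
        have e2 : (m - (j + 1)) + (q - (m - j)) = q - 1 := by omega
        rw [← e2, ← smul_smul_pow, ← hy, hx]
      have h3 : t ^ m • (t ^ (q - m - 1) • y) = 0 := by
        rw [smul_smul_pow]
        have e3 : m + (q - m - 1) = q - 1 := by omega
        rw [e3]; exact h2
      obtain ⟨u, hu⟩ := A _ h3
      refine ⟨u, ?_⟩
      have key : t ^ (q - (m - (j + 1))) • u = t ^ (q - (m - j)) • y := by
        have e4 : q - (m - (j + 1)) = (j + 1) + (q - m) := by omega
        have e5 : (j + 1) + (q - m - 1) = q - (m - j) := by omega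
        rw [e4, ← smul_smul_pow, ← hu, smul_smul_pow, e5]
      rw [key]; exact hy
  intro x hx
  obtain ⟨y, hy⟩ := main (m - 1) le_rfl x (by
    have h5 : m - (m - 1) = 1 := by omega
    rw [h5]; simpa using hx)
  refine ⟨y, ?_⟩
  rw [hy]
  congr 2
  omega

end SocleShift

/-- Master criterion: if `φ : K[X] → R` is a surjective ring hom with kernel `(π^n)`,
`π` irreducible, then a finitely generated `R`-module is free iff the "socle condition"
holds. -/
theorem free_iff_socle {K : Type} [Field K] {R : Type*} [Ring R] (φ : K[X] →+* R)
    (hφ : Function.Surjective φ) (π : K[X]) (hπ : Irreducible π) (n : ℕ) (hn : 1 ≤ n)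
    (hker : RingHom.ker φ = Ideal.span {π ^ n})
    (M : Type v) [AddCommGroup M] [Module R M] [Module.Finite R M] :
    Module.Free R M ↔ ∀ x : M, φ π • x = 0 → ∃ y, x = φ (π ^ (n - 1)) • y := by
  letI : Module K[X] M := Module.compHom M φ
  have hsmul : ∀ (f : K[X]) (x : M), f • x = φ f • x := fun _ _ => rfl
  constructor
  · -- Free → socle
    intro hfree x hx
    have hann : ∀ r : R, φ π * r = 0 → ∃ s, r = φ (π ^ (n - 1)) * s := by
      intro r hr
      obtain ⟨f, rfl⟩ := hφ r
      have h1 : π * f ∈ RingHom.ker φ := by rw [RingHom.mem_ker, map_mul]; exact hr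
      rw [hker, Ideal.mem_span_singleton] at h1
      obtain ⟨c, hc⟩ := h1
      have h2 : f = π ^ (n - 1) * c := by
        apply mul_left_cancel₀ hπ.ne_zero
        rw [hc, ← mul_assoc, ← pow_succ']
        congr 2
        omega
      exact ⟨φ c, by rw [h2, map_mul]⟩
    haveI := hfree
    set b := Module.Free.chooseBasis R M with hb
    have hx' : ∀ i, φ π * b.repr x i = 0 := by
      intro i
      have h0 : φ π • b.repr x = 0 := by rw [← map_smul, hx, map_zero]
      have := DFunLike.congr_fun h0 i
      simpa [Finsupp.smul_apply, smul_eq_mul] using this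
    have hchoice : ∀ i, ∃ s, b.repr x i = φ (π ^ (n - 1)) * s := fun i => hann _ (hx' i)
    choose d hd using hchoice
    refine ⟨∑ i, d i • b i, ?_⟩
    rw [Finset.smul_sum]
    calc x = ∑ i, b.repr x i • b i := (b.sum_repr x).symm
    _ = ∑ i, φ (π ^ (n - 1)) • d i • b i := by
        refine Finset.sum_congr rfl fun i _ => ?_
        rw [smul_smul, ← hd i]
  · -- socle → free
    intro hsoc
    haveI hfinX : Module.Finite K[X] M := by
      obtain ⟨S, hS⟩ := Module.Finite.fg_top (R := R) (M := M)
      refine ⟨⟨S, top_le_iff.mp ?_⟩⟩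
      intro x _
      have hx : x ∈ Submodule.span R (S : Set M) := by rw [hS]; trivial
      refine Submodule.span_induction ?_ ?_ ?_ ?_ hx
      · exact fun y hy => Submodule.subset_span hy
      · exact Submodule.zero_mem _
      · exact fun y z _ _ hy hz => Submodule.add_mem _ hy hz
      · intro r y _ hy
        obtain ⟨f, rfl⟩ := hφ r
        rw [← hsmul]
        exact Submodule.smul_mem _ f hy
    have hπn0 : φ (π ^ n) = 0 := by
      rw [← RingHom.mem_ker, hker]
      exact Ideal.subset_span rfl
    haveI htor : Module.IsTorsion' M (Submonoid.powers π) := by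
      intro x
      refine ⟨⟨π ^ n, n, rfl⟩, ?_⟩
      show (π ^ n) • x = 0
      rw [hsmul, hπn0, zero_smul]
    classical
    obtain ⟨d, e, ⟨f⟩⟩ := Module.torsion_by_prime_power_decomposition hπ htor
    have hprime : Prime π := hπ.prime
    -- socle condition in terms of the K[X]-action
    have hsoc' : ∀ x : M, (π : K[X]) • x = 0 → ∃ y, x = (π ^ (n - 1) : K[X]) • y := by
      intro x hx
      rw [hsmul] at hx
      obtain ⟨y, hy⟩ := hsoc x hx
      exact ⟨y, by rw [hsmul]; exact hy⟩
    -- every exponent is 0 or n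
    have he : ∀ i : Fin d, e i ≠ 0 → e i = n := by
      intro i hi
      have hle : e i ≤ n := by
        set x1 : M := f.symm (DirectSum.lof K[X] (Fin d) _ i
          (Submodule.Quotient.mk (1 : K[X]))) with hx1
        have h1 : (π ^ n : K[X]) • x1 = 0 := by rw [hsmul, hπn0, zero_smul]
        have h2 : (π ^ n : K[X]) • (DirectSum.lof K[X] (Fin d)
            (fun j => K[X] ⧸ Submodule.span K[X] {π ^ e j}) i
            (Submodule.Quotient.mk (1 : K[X]))) = 0 := by
          have h2' := congrArg f h1
          rw [map_smul, map_zero, hx1, f.apply_symm_apply] at h2'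
          exact h2'
        have h3 := congrArg (fun z => z i) h2
        simp only [DirectSum.smul_apply, DirectSum.lof_apply, DirectSum.zero_apply] at h3
        rw [← Submodule.Quotient.mk_smul, Submodule.Quotient.mk_eq_zero,
          smul_eq_mul, mul_one] at h3
        rw [Submodule.mem_span_singleton] at h3
        obtain ⟨c, hc⟩ := h3
        have : π ^ e i ∣ π ^ n := ⟨c, by rw [← hc, smul_eq_mul, mul_comm]⟩
        exact (pow_dvd_pow_iff hπ.ne_zero hπ.not_isUnit).mp this
      have hge : n ≤ e i := by
        set q0 : K[X] := π ^ (e i - 1) with hq0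
        set x2 : M := f.symm (DirectSum.lof K[X] (Fin d) _ i
          (Submodule.Quotient.mk q0)) with hx2
        have h5 : (π : K[X]) • x2 = 0 := by
          rw [hx2, ← map_smul]
          convert map_zero f.symm
          rw [← map_smul]
          convert map_zero (DirectSum.lof K[X] (Fin d)
            (fun j => K[X] ⧸ Submodule.span K[X] {π ^ e j}) i)
          rw [← Submodule.Quotient.mk_smul, Submodule.Quotient.mk_eq_zero, smul_eq_mul]
          have : π * q0 = π ^ e i := by
            rw [hq0, ← pow_succ']
            congr 1
            omega
          rw [this]
          exact Submodule.mem_span_singleton_self _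
        obtain ⟨y, hy⟩ := hsoc' x2 h5
        obtain ⟨g', hg'⟩ := Submodule.Quotient.mk_surjective _ ((f y) i)
        have h6 : (Submodule.Quotient.mk q0 : K[X] ⧸ Submodule.span K[X] {π ^ e i}) =
            Submodule.Quotient.mk ((π ^ (n - 1) : K[X]) * g') := by
          have h6' := congrArg f hy
          rw [map_smul, hx2, f.apply_symm_apply] at h6'
          have h6'' := congrArg (fun z => z i) h6'
          simp only [DirectSum.smul_apply, DirectSum.lof_apply] at h6''
          rw [h6'', ← hg', ← Submodule.Quotient.mk_smul, smul_eq_mul]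
        have h7 : q0 - π ^ (n - 1) * g' ∈ Submodule.span K[X] {π ^ e i} :=
          (Submodule.Quotient.eq _).mp h6
        rw [Submodule.mem_span_singleton] at h7
        obtain ⟨c, hc⟩ := h7
        have h8 : π ^ (n - 1) ∣ π ^ (e i - 1) * (1 - c * π) := by
          refine ⟨g', ?_⟩
          have hei : π ^ e i = π ^ (e i - 1) * π := by
            rw [← pow_succ]
            congr 1
            omega
          have hc' : c * π ^ e i = q0 - π ^ (n - 1) * g' := by
            rw [← hc, smul_eq_mul]
          have : π ^ (n - 1) * g' = q0 - c * π ^ e i := by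
            linear_combination hc'
          rw [this, hq0, hei]; ring
        have h9 : ¬ (π ∣ (1 - c * π)) := by
          intro hdvd
          have h9' : π ∣ 1 := by
            have := dvd_add hdvd (Dvd.intro_left c rfl)
            simpa using this
          exact hπ.not_isUnit (isUnit_of_dvd_one h9')
        have h10 : π ^ (n - 1) ∣ π ^ (e i - 1) :=
          hprime.pow_dvd_of_dvd_mul_right _ h9 h8
        have := (pow_dvd_pow_iff hπ.ne_zero hπ.not_isUnit).mp h10
        omega
      omega
    -- Endgame: assemble an R-linear equivalence with a free module
    letI : Module K[X] R := Module.compHom R φ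
    have hsmulR : ∀ (a : K[X]) (r : R), a • r = φ a * r := fun _ _ => rfl
    let l : K[X] →ₗ[K[X]] R :=
      { toFun := φ
        map_add' := φ.map_add
        map_smul' := fun a b => by
          simp only [RingHom.id_apply, smul_eq_mul, hsmulR]
          exact φ.map_mul a b }
    have hkerl : LinearMap.ker l = Submodule.span K[X] {π ^ n} := by
      ext x
      rw [LinearMap.mem_ker]
      show φ x = 0 ↔ _
      rw [← RingHom.mem_ker, hker]
    let ψ0 : (K[X] ⧸ Submodule.span K[X] {π ^ n}) ≃ₗ[K[X]] R :=
      (Submodule.quotEquivOfEq _ _ hkerl.symm).trans (l.quotKerEquivOfSurjective hφ)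
    let ι' := {i : Fin d // e i ≠ 0}
    let ψ : (j : ι') → (K[X] ⧸ Submodule.span K[X] {π ^ e j.1}) ≃ₗ[K[X]] R := fun j =>
      (Submodule.quotEquivOfEq _ _ (by rw [he j.1 j.2])).trans ψ0
    -- subsingleton components
    have hsub : ∀ (i : Fin d), e i = 0 →
        Subsingleton (K[X] ⧸ Submodule.span K[X] {π ^ e i}) := by
      intro i h
      rw [Submodule.Quotient.subsingleton_iff, h, pow_zero]
      refine Submodule.eq_top_iff'.mpr fun x => Submodule.mem_span_singleton.mpr ⟨x, ?_⟩
      rw [smul_eq_mul, mul_one]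
    -- restriction equivalence between Pi types
    let F : ((i : Fin d) → K[X] ⧸ Submodule.span K[X] {π ^ e i}) →ₗ[K[X]]
        ((j : ι') → K[X] ⧸ Submodule.span K[X] {π ^ e j.1}) :=
      LinearMap.pi (fun j => LinearMap.proj j.1)
    let Ginv : ((j : ι') → K[X] ⧸ Submodule.span K[X] {π ^ e j.1}) →ₗ[K[X]]
        ((i : Fin d) → K[X] ⧸ Submodule.span K[X] {π ^ e i}) :=
      LinearMap.pi (fun i => if h : e i ≠ 0 then LinearMap.proj (⟨i, h⟩ : ι') else 0)
    let E2 : ((i : Fin d) → K[X] ⧸ Submodule.span K[X] {π ^ e i}) ≃ₗ[K[X]]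
        ((j : ι') → K[X] ⧸ Submodule.span K[X] {π ^ e j.1}) := by
      refine LinearEquiv.ofLinear F Ginv ?_ ?_
      · apply LinearMap.ext
        intro x
        funext j
        simp only [F, Ginv, LinearMap.comp_apply, LinearMap.pi_apply, LinearMap.proj_apply,
          LinearMap.id_apply]
        rw [dif_pos j.2]
        rfl
      · apply LinearMap.ext
        intro x
        funext i
        simp only [F, Ginv, LinearMap.comp_apply, LinearMap.pi_apply, LinearMap.proj_apply,
          LinearMap.id_apply]
        by_cases h : e i ≠ 0
        · rw [dif_pos h]
          rfl
        · rw [dif_neg h]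
          haveI := hsub i (not_not.mp h)
          exact Subsingleton.elim _ _
    let E : M ≃ₗ[K[X]] (ι' → R) :=
      ((f.trans (DirectSum.linearEquivFunOnFintype K[X] (Fin d) _)).trans E2).trans
        (LinearEquiv.piCongrRight ψ)
    -- upgrade to an R-linear equivalence
    let ER : M ≃ₗ[R] (ι' → R) :=
      { toFun := E
        invFun := E.symm
        left_inv := E.left_inv
        right_inv := E.right_inv
        map_add' := E.map_add
        map_smul' := fun r x => by
          obtain ⟨a, rfl⟩ := hφ r
          show E (φ a • x) = φ a • E x
          rw [← hsmul, map_smul]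
          funext j
          show (φ a • E x) j = _
          rfl }
    exact Module.Free.of_equiv ER.symm

theorem free_iff_socle_cyclic (K : Type) [Field K] {Γ : Type*} [Group Γ] [Fintype Γ]
    (c : Γ) (hgen : ∀ x : Γ, ∃ j : ℕ, c ^ j = x) (N : ℕ) (hN : 1 ≤ N)
    (hcard : Fintype.card Γ = N) (hord : orderOf c = N)
    (hfactor : ((X : K[X]) - C 1) ^ N = X ^ N - 1)
    (M : Type v) [AddCommGroup M] [Module (MonoidAlgebra K Γ) M]
    [Module.Finite (MonoidAlgebra K Γ) M] :
    Module.Free (MonoidAlgebra K Γ) M ↔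
      ∀ x : M, (MonoidAlgebra.of K Γ c - 1) • x = 0 →
        ∃ y, x = ((MonoidAlgebra.of K Γ c - 1) ^ (N - 1)) • y := by
  let φa : K[X] →ₐ[K] MonoidAlgebra K Γ := aeval (MonoidAlgebra.of K Γ c)
  have hπirr : Irreducible ((X : K[X]) - C 1) := irreducible_X_sub_C (1 : K)
  have hφπ : φa ((X : K[X]) - C 1) = MonoidAlgebra.of K Γ c - 1 := by
    rw [map_sub, aeval_X, aeval_C, map_one]
  have hφ : Function.Surjective φa := by
    intro z
    refine MonoidAlgebra.induction_on (motive := fun z => ∃ a, φa a = z) z ?_ ?_ ?_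
    · intro x
      obtain ⟨j, rfl⟩ := hgen x
      exact ⟨X ^ j, by rw [map_pow, aeval_X, MonoidHom.map_pow]⟩
    · rintro f g ⟨u, hu⟩ ⟨w, hw⟩
      exact ⟨u + w, by rw [map_add, hu, hw]⟩
    · rintro r f ⟨u, hu⟩
      exact ⟨r • u, by rw [map_smul, hu]⟩
  have hXN : φa (((X : K[X]) - C 1) ^ N) = 0 := by
    rw [hfactor, map_sub, map_pow, aeval_X, map_one]
    have h1 : c ^ N = 1 := by rw [← hord]; exact pow_orderOf_eq_one c
    rw [← MonoidHom.map_pow, h1, MonoidHom.map_one, sub_self]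
  have hker := (Ideal.span_singleton_generator (RingHom.ker φa.toRingHom)).symm
  have hqdvd : Submodule.IsPrincipal.generator (RingHom.ker φa.toRingHom) ∣
      ((X : K[X]) - C 1) ^ N := by
    rw [← Ideal.mem_span_singleton, ← hker]
    exact RingHom.mem_ker.mpr hXN
  have hq0 : Submodule.IsPrincipal.generator (RingHom.ker φa.toRingHom) ≠ 0 := by
    intro h0
    rw [h0, zero_dvd_iff] at hqdvd
    exact pow_ne_zero N (X_sub_C_ne_zero (1 : K)) hqdvd
  have hfr : Module.finrank K (MonoidAlgebra K Γ) = N := by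
    rw [← hcard]; exact Module.finrank_eq_card_basis (MonoidAlgebra.basis Γ K)
  have hquot : Module.finrank K (K[X] ⧸ RingHom.ker φa.toRingHom) = N := by
    have equivA : (K[X] ⧸ RingHom.ker φa.toRingHom) ≃ₐ[K] MonoidAlgebra K Γ :=
      Ideal.quotientKerAlgEquivOfSurjective hφ
    rw [← hfr]
    exact equivA.toLinearEquiv.finrank_eq
  have hdeg : (Submodule.IsPrincipal.generator (RingHom.ker φa.toRingHom)).natDegree = N := by
    have h2 : Module.finrank K (K[X] ⧸ Ideal.span
        {Submodule.IsPrincipal.generator (RingHom.ker φa.toRingHom)}) =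
        (Submodule.IsPrincipal.generator (RingHom.ker φa.toRingHom)).natDegree :=
      (AdjoinRoot.powerBasis hq0).finrank
    rw [← hker] at h2
    rw [← h2, hquot]
  obtain ⟨j, hjN, hassoc⟩ := (dvd_prime_pow hπirr.prime N).mp hqdvd
  have hjdeg : (Submodule.IsPrincipal.generator (RingHom.ker φa.toRingHom)).natDegree = j := by
    obtain ⟨u, hu⟩ := hassoc.symm
    have hu0 : (u : K[X]) ≠ 0 := Units.ne_zero u
    rw [← hu, natDegree_mul (pow_ne_zero j (X_sub_C_ne_zero (1 : K))) hu0,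
      natDegree_pow, natDegree_X_sub_C, natDegree_eq_zero_of_isUnit u.isUnit]
    ring
  have hj : j = N := by omega
  rw [hj] at hassoc
  have hkerfinal : RingHom.ker φa.toRingHom = Ideal.span {((X : K[X]) - C 1) ^ N} := by
    rw [hker]
    exact Ideal.span_singleton_eq_span_singleton.mpr hassoc
  have key := free_iff_socle φa.toRingHom hφ ((X : K[X]) - C 1) hπirr N hN hkerfinal M
  have hφπ' : φa.toRingHom ((X : K[X]) - C 1) = MonoidAlgebra.of K Γ c - 1 := hφπ
  have hφπN : φa.toRingHom (((X : K[X]) - C 1) ^ (N - 1)) =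
      (MonoidAlgebra.of K Γ c - 1) ^ (N - 1) := by
    rw [map_pow, hφπ']
  rw [key, hφπ', hφπN]

/-- The module structure on `M` over the group algebra `F_p[H]` of a subgroup `H ≤ G`,
obtained by restricting a module structure over `F_p[G]` along the inclusion `H → G`. -/
noncomputable def restrictedModule (p : ℕ) [Fact p.Prime] {G : Type*} [Group G]
    (H : Subgroup G) (M : Type*) [AddCommGroup M]
    [Module (MonoidAlgebra (ZMod p) G) M] :
    Module (MonoidAlgebra (ZMod p) H) M :=
  Module.compHom M (MonoidAlgebra.mapDomainRingHom (ZMod p) H.subtype)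

/-- Let `G` be a cyclic group of order `p^a` and `H` its (unique) subgroup of order `p`,
`p` a prime. A finitely generated `F_p[G]`-module `M` is free over `F_p[G]` if and only
if its restriction to `H` is free over `F_p[H]`. -/

theorem stmt6 (p : ℕ) [Fact p.Prime] (a : ℕ) (ha : 1 ≤ a)
    (G : Type*) [Group G] [IsCyclic G] [Fintype G] (hG : Fintype.card G = p ^ a)
    (H : Subgroup G) (hH : Nat.card H = p)
    (M : Type*) [AddCommGroup M] [Module (MonoidAlgebra (ZMod p) G) M]
    [Module.Finite (MonoidAlgebra (ZMod p) G) M] :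
    Module.Free (MonoidAlgebra (ZMod p) G) M ↔
      @Module.Free (MonoidAlgebra (ZMod p) H) M _ _ (restrictedModule p H M) := by
  classical
  have hp : p.Prime := Fact.out
  obtain ⟨g, hg⟩ := IsCyclic.exists_generator (α := G)
  have hordg : orderOf g = p ^ a := by
    rw [orderOf_eq_card_of_forall_mem_zpowers hg, Nat.card_eq_fintype_card, hG]
  set m := p ^ (a - 1) with hm
  have hpm : p * m = p ^ a := by
    rw [hm, ← pow_succ']
    congr 1
    omega
  have hm1 : 1 ≤ m := Nat.one_le_iff_ne_zero.mpr (pow_ne_zero _ hp.pos.ne')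
  have hPa : 1 ≤ p ^ a := Nat.one_le_iff_ne_zero.mpr (pow_ne_zero _ hp.pos.ne')
  have hggen : ∀ x : G, ∃ j : ℕ, g ^ j = x := fun x =>
    mem_powers_iff_mem_zpowers.mpr (hg x)
  -- H is the subgroup generated by g^m
  have hord_gm : orderOf (g ^ m) = p := by
    rw [orderOf_pow, hordg, Nat.gcd_eq_right (pow_dvd_pow p (by omega : a - 1 ≤ a)),
      Nat.pow_div (by omega) hp.pos]
    have h6 : a - (a - 1) = 1 := by omega
    rw [h6, pow_one]
  have hHz : H = Subgroup.zpowers (g ^ m) := by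
    have hcard : Nat.card (Subgroup.zpowers (g ^ m)) = p := by
      rw [Nat.card_zpowers, hord_gm]
    refine Subgroup.eq_of_le_of_card_ge ?_ (by rw [hcard, hH])
    intro x hx
    obtain ⟨i, rfl⟩ := Subgroup.mem_zpowers_iff.mp (hg x)
    have h1 : (g ^ i) ^ (p : ℕ) = 1 := by
      have h2 : (⟨g ^ i, hx⟩ : H) ^ p = 1 := by
        rw [← hH]
        exact pow_card_eq_one'
      have h2' := congrArg (Subtype.val) h2
      rw [SubmonoidClass.coe_pow] at h2'
      simpa using h2'
    have h3 : g ^ (i * (p : ℤ)) = 1 := by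
      rw [← zpow_natCast (g ^ i) p, ← zpow_mul] at h1
      exact h1
    have h4 : ((p ^ a : ℕ) : ℤ) ∣ i * (p : ℤ) := by
      rw [← hordg]
      exact orderOf_dvd_iff_zpow_eq_one.mpr h3
    obtain ⟨c, hc⟩ := h4
    have h5 : i = (m : ℤ) * c := by
      have hpc : ((p : ℕ) : ℤ) ≠ 0 := by exact_mod_cast hp.pos.ne'
      apply mul_right_cancel₀ hpc
      rw [hc, ← hpm]
      push_cast
      ring
    refine Subgroup.mem_zpowers_iff.mpr ⟨c, ?_⟩
    rw [← zpow_natCast g m, ← zpow_mul, ← h5]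
  -- the generator of H
  let hh : H := ⟨g ^ m, by rw [hHz]; exact Subgroup.mem_zpowers _⟩
  have hordhh : orderOf hh = p := by
    have := orderOf_injective H.subtype Subtype.coe_injective hh
    rw [← this]
    exact hord_gm
  haveI : Fintype H := Fintype.ofFinite H
  have hcardH : Fintype.card H = p := by rw [← Nat.card_eq_fintype_card, hH]
  have hhgen : ∀ y : H, ∃ j : ℕ, hh ^ j = y := by
    intro y
    refine mem_powers_iff_mem_zpowers.mpr ?_
    have hy : (y : G) ∈ Subgroup.zpowers (g ^ m) := by rw [← hHz]; exact y.2
    obtain ⟨i, hi⟩ := Subgroup.mem_zpowers_iff.mp hy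
    refine Subgroup.mem_zpowers_iff.mpr ⟨i, ?_⟩
    apply Subtype.ext
    rw [← hi]
    push_cast
    rfl
  -- CharP facts
  haveI hcharG : CharP (MonoidAlgebra (ZMod p) G) p := by
    refine charP_of_injective_algebraMap (R := ZMod p) ?_ p
    rw [MonoidAlgebra.coe_algebraMap]
    intro x y hxy
    simp only [Function.comp_apply, Algebra.algebraMap_self, RingHom.id_apply] at hxy
    exact MonoidAlgebra.single_right_injective hxy
  -- Frobenius identities
  have hfactorG : ((X : (ZMod p)[X]) - C 1) ^ (p ^ a) = X ^ (p ^ a) - 1 := by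
    have := sub_pow_char_pow (R := (ZMod p)[X]) (p := p) (n := a) (x := X) (y := C 1)
    rw [this]
    rw [← C_pow, one_pow, C_1]
  have hfactorH : ((X : (ZMod p)[X]) - C 1) ^ p = X ^ p - 1 := by
    have := sub_pow_char (R := (ZMod p)[X]) (p := p) (x := X) (y := C 1)
    rw [this, ← C_pow, one_pow, C_1]
  -- Frobenius in the group algebra
  set tG : MonoidAlgebra (ZMod p) G := MonoidAlgebra.of (ZMod p) G g - 1 with htG
  have hfrobR : tG ^ m = (MonoidAlgebra.of (ZMod p) G g) ^ m - 1 := by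
    rw [htG, hm]
    rw [sub_pow_char_pow_of_commute p (a - 1) (Commute.one_right _), one_pow]
  -- the restricted module structure
  letI instH : Module (MonoidAlgebra (ZMod p) H) M := restrictedModule p H M
  have key : ∀ (r : MonoidAlgebra (ZMod p) H) (x : M),
      r • x = (MonoidAlgebra.mapDomainRingHom (ZMod p) H.subtype r) • x := fun _ _ => rfl
  -- the image of `of hh - 1` is `tG ^ m`
  have hofhh : (MonoidAlgebra.mapDomainRingHom (ZMod p) H.subtype)
      (MonoidAlgebra.of (ZMod p) H hh) = MonoidAlgebra.of (ZMod p) G (g ^ m) := by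
    show MonoidAlgebra.mapDomain (H.subtype) (MonoidAlgebra.single hh 1) = MonoidAlgebra.single (g ^ m) 1
    rw [MonoidAlgebra.mapDomain_single]
    rfl
  have hlink : (MonoidAlgebra.mapDomainRingHom (ZMod p) H.subtype)
      (MonoidAlgebra.of (ZMod p) H hh - 1) = tG ^ m := by
    rw [map_sub, map_one, hofhh, hfrobR, MonoidHom.map_pow]
  -- commutativity facts
  have hcommG : ∀ x y : G, x * y = y * x := by
    intro x y
    obtain ⟨i, rfl⟩ := Subgroup.mem_zpowers_iff.mp (hg x)
    obtain ⟨j, rfl⟩ := Subgroup.mem_zpowers_iff.mp (hg y)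
    rw [← zpow_add, ← zpow_add, add_comm]
  have hRcomm : ∀ (r : MonoidAlgebra (ZMod p) G) (x : G),
      MonoidAlgebra.of (ZMod p) G x * r = r * MonoidAlgebra.of (ZMod p) G x := by
    intro r x
    refine MonoidAlgebra.induction_on
      (motive := fun r => MonoidAlgebra.of (ZMod p) G x * r = r * MonoidAlgebra.of (ZMod p) G x)
      r ?_ ?_ ?_
    · intro y
      rw [← map_mul, ← map_mul, hcommG]
    · intro f1 f2 h1 h2
      rw [mul_add, add_mul, h1, h2]
    · intro c f hf
      rw [mul_smul_comm, smul_mul_assoc, hf]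
  have halg : ∀ (c : ZMod p), (algebraMap (ZMod p) (MonoidAlgebra (ZMod p) G)) c =
      (MonoidAlgebra.mapDomainRingHom (ZMod p) H.subtype)
        (algebraMap (ZMod p) (MonoidAlgebra (ZMod p) H) c) := by
    intro c
    show MonoidAlgebra.single 1 c = MonoidAlgebra.mapDomain (H.subtype) (MonoidAlgebra.single 1 c)
    rw [MonoidAlgebra.mapDomain_single]
    rfl
  -- M is finitely generated over the subgroup algebra
  haveI finH : Module.Finite (MonoidAlgebra (ZMod p) H) M := by
    obtain ⟨S, hS⟩ := Module.Finite.fg_top (R := MonoidAlgebra (ZMod p) G) (M := M)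
    let T : Finset M := (Finset.range (p ^ a) ×ˢ S).image
      (fun js => ((MonoidAlgebra.of (ZMod p) G g) ^ js.1) • js.2)
    refine ⟨⟨T, top_le_iff.mp ?_⟩⟩
    have hTW : ∀ (j : ℕ) (s : M), j < p ^ a → s ∈ S →
        ((MonoidAlgebra.of (ZMod p) G g) ^ j) • s ∈
          Submodule.span (MonoidAlgebra (ZMod p) H) (T : Set M) := by
      intro j s hj hs
      apply Submodule.subset_span
      exact Finset.mem_coe.mpr (Finset.mem_image.mpr
        ⟨(j, s), Finset.mem_product.mpr ⟨Finset.mem_range.mpr hj, hs⟩, rfl⟩)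
    have claim1 : ∀ x ∈ Submodule.span (MonoidAlgebra (ZMod p) H) (T : Set M),
        (MonoidAlgebra.of (ZMod p) G g) • x ∈
          Submodule.span (MonoidAlgebra (ZMod p) H) (T : Set M) := by
      intro x hx
      refine Submodule.span_induction ?_ ?_ ?_ ?_ hx
      · intro y hy
        obtain ⟨js, hmem, rfl⟩ := Finset.mem_image.mp (Finset.mem_coe.mp hy)
        obtain ⟨hj, hs⟩ := Finset.mem_product.mp hmem
        rw [smul_smul, ← pow_succ']
        rcases Nat.lt_or_ge (js.1 + 1) (p ^ a) with hlt | hge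
        · exact hTW _ _ hlt hs
        · have hj1 : js.1 + 1 = p ^ a := by
            have := Finset.mem_range.mp hj
            omega
          rw [hj1]
          have hone : (MonoidAlgebra.of (ZMod p) G g) ^ (p ^ a) = 1 := by
            rw [← MonoidHom.map_pow, ← hordg, pow_orderOf_eq_one, MonoidHom.map_one]
          rw [hone, one_smul]
          have h0 := hTW 0 js.2 hPa hs
          rw [pow_zero, one_smul] at h0
          exact h0
      · rw [smul_zero]
        exact Submodule.zero_mem _
      · intro y z _ _ hy hz
        rw [smul_add]
        exact Submodule.add_mem _ hy hz
      · intro r y _ hy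
        have hcs : (MonoidAlgebra.of (ZMod p) G g) • r • y =
            r • ((MonoidAlgebra.of (ZMod p) G g) • y) := by
          rw [key r y, key r ((MonoidAlgebra.of (ZMod p) G g) • y), smul_smul, smul_smul, hRcomm]
        rw [hcs]
        exact Submodule.smul_mem _ r hy
    have claim2 : ∀ (j : ℕ), ∀ x ∈ Submodule.span (MonoidAlgebra (ZMod p) H) (T : Set M),
        ((MonoidAlgebra.of (ZMod p) G g) ^ j) • x ∈
          Submodule.span (MonoidAlgebra (ZMod p) H) (T : Set M) := by
      intro j
      induction j with
      | zero =>
        intro x hx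
        rw [pow_zero, one_smul]
        exact hx
      | succ j ih =>
        intro x hx
        rw [pow_succ', mul_smul]
        exact claim1 _ (ih x hx)
    have claim3 : ∀ (r : MonoidAlgebra (ZMod p) G),
        ∀ x ∈ Submodule.span (MonoidAlgebra (ZMod p) H) (T : Set M),
          r • x ∈ Submodule.span (MonoidAlgebra (ZMod p) H) (T : Set M) := by
      intro r
      refine MonoidAlgebra.induction_on
        (motive := fun r => ∀ x ∈ Submodule.span (MonoidAlgebra (ZMod p) H) (T : Set M),
          r • x ∈ Submodule.span (MonoidAlgebra (ZMod p) H) (T : Set M)) r ?_ ?_ ?_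
      · intro y x hx
        obtain ⟨j, rfl⟩ := hggen y
        rw [MonoidHom.map_pow]
        exact claim2 j x hx
      · intro f1 f2 h1 h2 x hx
        rw [add_smul]
        exact Submodule.add_mem _ (h1 x hx) (h2 x hx)
      · intro c f hf x hx
        rw [Algebra.smul_def, mul_smul, halg, ← key]
        exact Submodule.smul_mem _ _ (hf x hx)
    intro x _
    have hx : x ∈ Submodule.span (MonoidAlgebra (ZMod p) G) (S : Set M) := by
      rw [hS]
      trivial
    refine Submodule.span_induction ?_ ?_ ?_ ?_ hx
    · intro y hy
      have h0 := hTW 0 y hPa hy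
      rw [pow_zero, one_smul] at h0
      exact h0
    · exact Submodule.zero_mem _
    · intro y z _ _ hy hz
      exact Submodule.add_mem _ hy hz
    · intro r y _ hy
      exact claim3 r y hy
  -- the two socle criteria
  have iffG := free_iff_socle_cyclic (ZMod p) g hggen (p ^ a) hPa hG hordg hfactorG M
  have iffH := free_iff_socle_cyclic (ZMod p) hh hhgen p hp.one_le hcardH hordhh hfactorH M
  -- identities translating the H-side socle condition
  have hsH1 : ∀ x : M, (MonoidAlgebra.of (ZMod p) H hh - 1) • x = (tG ^ m) • x := by
    intro x
    rw [key, hlink]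
  have hsH2 : ∀ y : M, ((MonoidAlgebra.of (ZMod p) H hh - 1) ^ (p - 1)) • y =
      (tG ^ (p ^ a - m)) • y := by
    intro y
    rw [key, map_pow, hlink, ← pow_mul]
    have e : m * (p - 1) = p ^ a - m := by
      have e1 : m * (p - 1) = m * p - m := by
        cases p with
        | zero => simp
        | succ q => simp [Nat.mul_succ]
      rw [e1, mul_comm m p, hpm]
    rw [e]
  have hmle : m ≤ p ^ a := by
    rw [← hpm]
    exact Nat.le_mul_of_pos_left m hp.pos
  refine iffG.trans (Iff.trans ?_ iffH.symm)
  constructor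
  · intro hSG x hx
    rw [hsH1] at hx
    obtain ⟨y, hy⟩ := socle_shift_up tG (n := p ^ a) hSG m hm1 hmle x hx
    exact ⟨y, by rw [hsH2]; exact hy⟩
  · intro hSH
    refine socle_shift_down tG (q := p ^ a) (m := m) hm1 ?_ ?_
    · rw [← hpm]
      exact Nat.mul_le_mul_right m hp.two_le
    · intro x hx
      obtain ⟨y, hy⟩ := hSH x (by rw [hsH1]; exact hx)
      rw [hsH2] at hy
      exact ⟨y, hy⟩
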